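/- Let R₀ > 0, let G : [R₀, ∞) × ℝ → (0, ∞) be a continuous function such that r ↦ G(r, θ) is nondecreasing for every θ, and let ρ, φ : [0, 1] → ℝ be C¹ functions with ρ(s) ≥ R₀ for all s. Define Len(γ) := ∫₀¹ √(ρ′(s)² + G(ρ(s), φ(s))²·φ′(s)²) ds and Len(γ₀) := ∫₀¹ G(R₀, φ(s))·|φ′(s)| ds. If Len(γ) > 0, then Len(γ) ≥ Len(γ₀) + (max ρ − min ρ)² / (2·Len(γ)). -/

import Mathlib

open Set

/-- The length estimate from the proof of strong convexity (Lemma 2.8 of the paper):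
the length of a curve `γ = (ρ, φ)` (in polar coordinates for the metric
`dr² + G² dθ²`) staying outside the disc of radius `R₀` is at least the length of its
radial projection to the circle `r = R₀` plus `(max ρ - min ρ)²/(2 Len γ)`. -/
theorem length_estimate (R₀ : ℝ) (hR₀ : 0 < R₀) (G : ℝ → ℝ → ℝ)
    (hGcont : ContinuousOn (fun p : ℝ × ℝ => G p.1 p.2) (Ici R₀ ×ˢ univ))
    (hGpos : ∀ r θ : ℝ, R₀ ≤ r → 0 < G r θ)
    (hGmono : ∀ θ r₁ r₂ : ℝ, R₀ ≤ r₁ → r₁ ≤ r₂ → G r₁ θ ≤ G r₂ θ)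
    (ρ φ ρ' φ' : ℝ → ℝ)
    (hρ : ∀ s ∈ Icc (0:ℝ) 1, HasDerivWithinAt ρ (ρ' s) (Icc 0 1) s)
    (hφ : ∀ s ∈ Icc (0:ℝ) 1, HasDerivWithinAt φ (φ' s) (Icc 0 1) s)
    (hρ'c : ContinuousOn ρ' (Icc 0 1)) (hφ'c : ContinuousOn φ' (Icc 0 1))
    (hρR₀ : ∀ s ∈ Icc (0:ℝ) 1, R₀ ≤ ρ s)
    (Len Len₀ : ℝ)
    (hLen : Len = ∫ s in (0:ℝ)..1, Real.sqrt (ρ' s ^ 2 + G (ρ s) (φ s) ^ 2 * φ' s ^ 2))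
    (hLen₀ : Len₀ = ∫ s in (0:ℝ)..1, G R₀ (φ s) * |φ' s|)
    (hpos : 0 < Len) :
    Len₀ + (sSup (ρ '' Icc 0 1) - sInf (ρ '' Icc 0 1)) ^ 2 / (2 * Len) ≤ Len := by
  have h01 : uIcc (0:ℝ) 1 = Icc 0 1 := uIcc_of_le zero_le_one
  set f : ℝ → ℝ := fun s => Real.sqrt (ρ' s ^ 2 + G (ρ s) (φ s) ^ 2 * φ' s ^ 2) with hfdef
  have hρc : ContinuousOn ρ (Icc 0 1) := fun s hs => (hρ s hs).continuousWithinAt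
  have hφc : ContinuousOn φ (Icc 0 1) := fun s hs => (hφ s hs).continuousWithinAt
  have hGργ : ContinuousOn (fun s => G (ρ s) (φ s)) (Icc 0 1) :=
    hGcont.comp (ContinuousOn.prodMk hρc hφc) (fun s hs => ⟨hρR₀ s hs, mem_univ _⟩)
  have hGR₀γ : ContinuousOn (fun s => G R₀ (φ s)) (Icc 0 1) :=
    hGcont.comp (ContinuousOn.prodMk continuousOn_const hφc) (fun s _ => ⟨le_refl R₀, mem_univ _⟩)
  have hfc : ContinuousOn f (Icc 0 1) :=
    ((hρ'c.pow 2).add ((hGργ.pow 2).mul (hφ'c.pow 2))).sqrt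
  have hi_f : IntervalIntegrable f MeasureTheory.volume 0 1 :=
    hfc.intervalIntegrable_of_Icc zero_le_one
  have hi_a : IntervalIntegrable (fun s => |ρ' s|) MeasureTheory.volume 0 1 :=
    hρ'c.abs.intervalIntegrable_of_Icc zero_le_one
  have hi_b0 : IntervalIntegrable (fun s => G R₀ (φ s) * |φ' s|) MeasureTheory.volume 0 1 :=
    (hGR₀γ.mul hφ'c.abs).intervalIntegrable_of_Icc zero_le_one
  set V : ℝ := ∫ s in (0:ℝ)..1, |ρ' s| with hVdef
  have hV0 : 0 ≤ V := intervalIntegral.integral_nonneg zero_le_one (fun u _ => abs_nonneg _)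
  set t : ℝ := V / Len with htdef
  have ht0 : 0 ≤ t := div_nonneg hV0 hpos.le
  -- pointwise inequality
  have key : ∀ s ∈ Icc (0:ℝ) 1,
      G R₀ (φ s) * |φ' s| + t * |ρ' s| - t ^ 2 / 2 * f s ≤ f s := by
    intro s hs
    set a := |ρ' s| with ha
    set b := G (ρ s) (φ s) * |φ' s| with hb
    have ha0 : 0 ≤ a := abs_nonneg _
    have hb0 : 0 ≤ b := mul_nonneg (hGpos _ _ (hρR₀ s hs)).le (abs_nonneg _)
    have hb00 : 0 ≤ G R₀ (φ s) * |φ' s| :=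
      mul_nonneg (hGpos _ _ le_rfl).le (abs_nonneg _)
    have hb0b : G R₀ (φ s) * |φ' s| ≤ b :=
      mul_le_mul_of_nonneg_right (hGmono _ _ _ le_rfl (hρR₀ s hs)) (abs_nonneg _)
    have hf0 : 0 ≤ f s := Real.sqrt_nonneg _
    have hf2 : f s ^ 2 = a ^ 2 + b ^ 2 := by
      show Real.sqrt _ ^ 2 = _
      rw [Real.sq_sqrt (by positivity), ha, hb, sq_abs, mul_pow, sq_abs]
    rcases eq_or_lt_of_le hf0 with hf | hf
    · have ha' : a = 0 := by nlinarith [sq_nonneg a, sq_nonneg b]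
      have hb' : b = 0 := by nlinarith [sq_nonneg a, sq_nonneg b]
      rw [← hf, ha']
      simp only [mul_zero, add_zero]
      linarith
    · nlinarith [sq_nonneg (a - t * f s), sq_nonneg (f s - b),
        mul_nonneg hf.le (sub_nonneg.2 hb0b), mul_pos hf hf]
  -- integrate the pointwise inequality
  have hint : Len₀ + t * V - t ^ 2 / 2 * Len ≤ Len := by
    have h1 : (∫ s in (0:ℝ)..1,
        (G R₀ (φ s) * |φ' s| + t * |ρ' s| - t ^ 2 / 2 * f s)) ≤
        ∫ s in (0:ℝ)..1, f s := by
      apply intervalIntegral.integral_mono_on zero_le_one _ hi_f key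
      exact (hi_b0.add (hi_a.const_mul t)).sub (hi_f.const_mul (t ^ 2 / 2))
    rw [intervalIntegral.integral_sub (hi_b0.add (hi_a.const_mul t))
        (hi_f.const_mul (t ^ 2 / 2)),
      intervalIntegral.integral_add hi_b0 (hi_a.const_mul t),
      intervalIntegral.integral_const_mul, intervalIntegral.integral_const_mul] at h1
    rw [hLen₀, hLen, hVdef]
    exact h1
  have hmain : Len₀ + V ^ 2 / (2 * Len) ≤ Len := by
    have e1 : t * V = V ^ 2 / Len := by rw [htdef]; ring
    have e2 : t ^ 2 / 2 * Len = V ^ 2 / (2 * Len) := by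
      rw [htdef]; field_simp
    rw [e1, e2] at hint
    have e3 : V ^ 2 / Len - V ^ 2 / (2 * Len) = V ^ 2 / (2 * Len) := by
      field_simp; ring
    linarith
  -- the oscillation of ρ is at most V
  have hcomp : IsCompact (ρ '' Icc 0 1) := isCompact_Icc.image_of_continuousOn hρc
  have hne : (ρ '' Icc 0 1).Nonempty :=
    ⟨ρ 0, mem_image_of_mem _ ⟨le_rfl, zero_le_one⟩⟩
  obtain ⟨s₁, hs₁, hρs₁⟩ := hcomp.sSup_mem hne
  obtain ⟨s₀, hs₀, hρs₀⟩ := hcomp.sInf_mem hne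
  have ftc : ∀ u ∈ Icc (0:ℝ) 1, ∀ v ∈ Icc (0:ℝ) 1, u ≤ v → |ρ v - ρ u| ≤ V := by
    intro u hu v hv huv
    have hsub : Icc u v ⊆ Icc (0:ℝ) 1 := Icc_subset_Icc hu.1 hv.2
    have hiuv : IntervalIntegrable ρ' MeasureTheory.volume u v :=
      (hρ'c.mono hsub).intervalIntegrable_of_Icc huv
    have heq : ∫ s in u..v, ρ' s = ρ v - ρ u := by
      apply intervalIntegral.integral_eq_sub_of_hasDeriv_right_of_le huv
        (hρc.mono hsub) _ hiuv
      intro x hx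
      have hx' : x ∈ Ioo (0:ℝ) 1 := ⟨lt_of_le_of_lt hu.1 hx.1, lt_of_lt_of_le hx.2 hv.2⟩
      exact ((hρ x (Ioo_subset_Icc_self hx')).hasDerivAt
        (Icc_mem_nhds hx'.1 hx'.2)).hasDerivWithinAt
    have h1 : |∫ s in u..v, ρ' s| ≤ ∫ s in u..v, |ρ' s| :=
      intervalIntegral.abs_integral_le_integral_abs huv
    have h2 : (∫ s in u..v, |ρ' s|) ≤ V :=
      intervalIntegral.integral_mono_interval hu.1 huv hv.2
        (MeasureTheory.ae_of_all _ fun x => abs_nonneg _) hi_a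
    rw [← heq]
    exact h1.trans h2
  have hDV : |ρ s₁ - ρ s₀| ≤ V := by
    rcases le_total s₀ s₁ with h | h
    · exact ftc _ hs₀ _ hs₁ h
    · rw [abs_sub_comm]; exact ftc _ hs₁ _ hs₀ h
  have hD : sSup (ρ '' Icc 0 1) - sInf (ρ '' Icc 0 1) ≤ V := by
    rw [← hρs₁, ← hρs₀]
    exact (le_abs_self _).trans hDV
  have hD0 : 0 ≤ sSup (ρ '' Icc 0 1) - sInf (ρ '' Icc 0 1) :=
    sub_nonneg.2 (csInf_le_csSup hne hcomp.bddBelow hcomp.bddAbove)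
  have hsq : (sSup (ρ '' Icc 0 1) - sInf (ρ '' Icc 0 1)) ^ 2 ≤ V ^ 2 :=
    pow_le_pow_left₀ hD0 hD 2
  have hfin : (sSup (ρ '' Icc 0 1) - sInf (ρ '' Icc 0 1)) ^ 2 / (2 * Len) ≤
      V ^ 2 / (2 * Len) :=
    div_le_div_of_nonneg_right hsq (by linarith) |>.trans_eq rfl
  linarith
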